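/- Let B be an atomless Boolean algebra containing a countably infinite set of pairwise disjoint nonzero elements {a_n : n ∈ ℕ} that has no supremum in B. Then there exist partitions P and Q of B such that the pair {P, Q} has no supremum in the refinement order: for every partition R with P ⪯ R and Q ⪯ R there is a partition R₀ ≠ R with P ⪯ R₀, Q ⪯ R₀ and R₀ ⪯ R. -/

import Mathlib

open Cardinal Filter

variable {B : Type*}

/-- A partition of a Boolean algebra: a set of nonzero, pairwise disjoint
elements that is maximal (every nonzero element meets some member). -/
def IsBPartition [BooleanAlgebra B] (P : Set B) : Prop :=
  ⊥ ∉ P ∧ (P.Pairwise fun a b => a ⊓ b = ⊥) ∧ ∀ b : B, b ≠ ⊥ → ∃ p ∈ P, b ⊓ p ≠ ⊥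

/-- `P` refines `Q`: every member of `P` lies below some member of `Q`. -/
def BRefines [BooleanAlgebra B] (P Q : Set B) : Prop :=
  ∀ p ∈ P, ∃ q ∈ Q, p ≤ q

/-- A filter on a Boolean algebra. -/
def IsBFilter [BooleanAlgebra B] (F : Set B) : Prop :=
  ⊥ ∉ F ∧ ⊤ ∈ F ∧ (∀ a ∈ F, ∀ b : B, a ≤ b → b ∈ F) ∧ ∀ a ∈ F, ∀ b ∈ F, a ⊓ b ∈ F

/-- An ultrafilter on a Boolean algebra. -/
def IsBUltrafilter [BooleanAlgebra B] (U : Set B) : Prop :=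
  IsBFilter U ∧ ∀ b : B, b ∈ U ∨ bᶜ ∈ U

/-- The countable chain condition: every set of pairwise disjoint
nonzero elements is countable. -/
def BCCC (B : Type*) [BooleanAlgebra B] : Prop :=
  ∀ S : Set B, ⊥ ∉ S → (S.Pairwise fun a b => a ⊓ b = ⊥) → S.Countable

/-- A filter on ℕ, presented as a family of subsets of ℕ. -/
def IsNFilter (V : Set (Set ℕ)) : Prop :=
  ∅ ∉ V ∧ Set.univ ∈ V ∧ (∀ A ∈ V, ∀ C : Set ℕ, A ⊆ C → C ∈ V) ∧
    ∀ A ∈ V, ∀ C ∈ V, A ∩ C ∈ V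

/-- An ultrafilter on ℕ, presented as a family of subsets of ℕ. -/
def IsNUltrafilter (V : Set (Set ℕ)) : Prop :=
  IsNFilter V ∧ ∀ A : Set ℕ, A ∈ V ∨ Aᶜ ∈ V

/-- A P-point on ℕ: an ultrafilter such that for every partition of ℕ into
sets not in the ultrafilter there is a member meeting each piece finitely. -/
def IsPPointFamily (V : Set (Set ℕ)) : Prop :=
  IsNUltrafilter V ∧ ∀ A : ℕ → Set ℕ, (Pairwise fun m n => A m ∩ A n = ∅) →
    (⋃ n, A n) = Set.univ → (∀ n, A n ∉ V) → ∃ S ∈ V, ∀ n, (S ∩ A n).Finite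

/-- A selective ultrafilter on ℕ: for every partition of ℕ into sets not in
the ultrafilter there is a member meeting each piece in at most one point. -/
def IsSelectiveFamily (V : Set (Set ℕ)) : Prop :=
  IsNUltrafilter V ∧ ∀ A : ℕ → Set ℕ, (Pairwise fun m n => A m ∩ A n = ∅) →
    (⋃ n, A n) = Set.univ → (∀ n, A n ∉ V) → ∃ S ∈ V, ∀ n, (S ∩ A n).Subsingleton

/-- A coherent P-ultrafilter: an ultrafilter whose trace on every countably
infinite partition is a P-point on ℕ. -/
def IsCoherentPUltrafilter [CompleteBooleanAlgebra B] (U : Set B) : Prop :=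
  IsBUltrafilter U ∧ ∀ p : ℕ → B, Function.Injective p → IsBPartition (Set.range p) →
    IsPPointFamily {A : Set ℕ | (⨆ n ∈ A, p n) ∈ U}

/-- A coherent selective ultrafilter: an ultrafilter whose trace on every
countably infinite partition is a selective ultrafilter on ℕ. -/
def IsCoherentSelectiveUltrafilter [CompleteBooleanAlgebra B] (U : Set B) : Prop :=
  IsBUltrafilter U ∧ ∀ p : ℕ → B, Function.Injective p → IsBPartition (Set.range p) →
    IsSelectiveFamily {A : Set ℕ | (⨆ n ∈ A, p n) ∈ U}

/-- Atomless: every nonzero element properly contains a nonzero element. -/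
def BAtomless (B : Type*) [BooleanAlgebra B] : Prop :=
  ∀ b : B, b ≠ ⊥ → ∃ c : B, c ≠ ⊥ ∧ c < b

private lemma part_eq_of_inf_ne_bot [BooleanAlgebra B] {R : Set B} (hR : IsBPartition R)
    {x y : B} (hx : x ∈ R) (hy : y ∈ R) (h : x ⊓ y ≠ ⊥) : x = y := by
  by_contra hne
  exact h (hR.2.1 hx hy hne)

private lemma sup_inf_sup_eq_bot [BooleanAlgebra B] {x₁ x₂ y₁ y₂ : B}
    (h11 : x₁ ⊓ y₁ = ⊥) (h12 : x₁ ⊓ y₂ = ⊥) (h21 : x₂ ⊓ y₁ = ⊥) (h22 : x₂ ⊓ y₂ = ⊥) :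
    (x₁ ⊔ x₂) ⊓ (y₁ ⊔ y₂) = ⊥ := by
  simp [inf_sup_left, inf_sup_right, h11, h12, h21, h22]

private lemma exists_maximal_disjoint_family [BooleanAlgebra B] (a : ℕ → B) :
    ∃ W : Set B, (∀ w ∈ W, w ≠ ⊥ ∧ ∀ n, w ⊓ a n = ⊥) ∧
      (W.Pairwise fun x y => x ⊓ y = ⊥) ∧
      ∀ b : B, b ≠ ⊥ → (∀ n, b ⊓ a n = ⊥) → ∃ w ∈ W, b ⊓ w ≠ ⊥ := by
  obtain ⟨W, hWS, hWmax⟩ := zorn_subset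
    {W : Set B | (∀ w ∈ W, w ≠ ⊥ ∧ ∀ n, w ⊓ a n = ⊥) ∧ W.Pairwise fun x y => x ⊓ y = ⊥}
    (by
      intro c hcS hchain
      refine ⟨⋃₀ c, ⟨?_, ?_⟩, fun s hs => Set.subset_sUnion_of_mem hs⟩
      · rintro w ⟨s, hs, hws⟩
        exact (hcS hs).1 w hws
      · rintro x ⟨s, hs, hxs⟩ y ⟨t, ht, hyt⟩ hxy
        rcases hchain.total hs ht with hst | hts
        · exact (hcS ht).2 (hst hxs) hyt hxy
        · exact (hcS hs).2 hxs (hts hyt) hxy)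
  refine ⟨W, hWS.1, hWS.2, ?_⟩
  intro b hb hba
  by_contra h
  push_neg at h
  have hbW : b ∉ W := fun hbW => hb (by simpa using h b hbW)
  have hins : insert b W ∈
      {W : Set B | (∀ w ∈ W, w ≠ ⊥ ∧ ∀ n, w ⊓ a n = ⊥) ∧ W.Pairwise fun x y => x ⊓ y = ⊥} := by
    constructor
    · rintro w (rfl | hw)
      · exact ⟨hb, hba⟩
      · exact hWS.1 w hw
    · haveI : Std.Symm (fun x y : B => x ⊓ y = ⊥) := ⟨fun x y hxy => by rwa [inf_comm]⟩
      exact (Set.pairwise_insert_of_symm).2 ⟨hWS.2, fun w hw _ => h w hw⟩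
  exact hbW (hWmax hins (Set.subset_insert b W) (Set.mem_insert b W))

/-- In an atomless Boolean algebra with a countable disjoint family having
no supremum, there are two partitions with no supremum in the refinement
order. -/
theorem no_supremum_of_partitions [BooleanAlgebra B] (hat : BAtomless B)
    (a : ℕ → B) (hinj : Function.Injective a) (hne : ∀ n, a n ≠ ⊥)
    (hdis : Pairwise fun m n => a m ⊓ a n = ⊥)
    (hnosup : ¬∃ s : B, IsLUB (Set.range a) s) :
    ∃ P Q : Set B, IsBPartition P ∧ IsBPartition Q ∧
      ∀ R : Set B, IsBPartition R → BRefines P R → BRefines Q R →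
        ∃ R₀ : Set B, IsBPartition R₀ ∧ R₀ ≠ R ∧
          BRefines P R₀ ∧ BRefines Q R₀ ∧ BRefines R₀ R := by
  classical
  obtain ⟨W, hWel, hWpd, hWmax⟩ := exists_maximal_disjoint_family a
  set blkP : ℕ → B := fun n => a (2*n) ⊔ a (2*n+1) with hblkP
  set blkQ : ℕ → B := fun n => a (2*n+1) ⊔ a (2*n+2) with hblkQ
  have hWne : ∀ w ∈ W, w ≠ ⊥ := fun w hw => (hWel w hw).1
  have hWa : ∀ w ∈ W, ∀ n, w ⊓ a n = ⊥ := fun w hw => (hWel w hw).2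
  have haW : ∀ w ∈ W, ∀ n, a n ⊓ w = ⊥ := fun w hw n => by rw [inf_comm]; exact hWa w hw n
  -- P and Q
  set P : Set B := Set.range blkP ∪ W with hPdef
  set Q : Set B := insert (a 0) (Set.range blkQ ∪ W) with hQdef
  have hPpart : IsBPartition P := by
    refine ⟨?_, ?_, ?_⟩
    · rintro (⟨k, hk⟩ | hW)
      · exact hne (2*k) (le_bot_iff.1 (hk ▸ le_sup_left))
      · exact hWne ⊥ hW rfl
    · have hPW : ∀ w ∈ W, ∀ k, blkP k ⊓ w = ⊥ := fun w hw k => by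
        simp [hblkP, inf_sup_right, haW w hw]
      rintro x (⟨k, rfl⟩ | hxW) y (⟨l, rfl⟩ | hyW) hxy
      · simp only [hblkP]
        refine sup_inf_sup_eq_bot (hdis ?_) (hdis ?_) (hdis ?_) (hdis ?_) <;>
          · intro h; exact hxy (congrArg _ (by omega : k = l))
      · exact hPW y hyW k
      · rw [inf_comm]; exact hPW x hxW l
      · exact hWpd hxW hyW hxy
    · intro b hb
      by_cases hmeet : ∃ n, b ⊓ a n ≠ ⊥
      · obtain ⟨n, hn⟩ := hmeet
        rcases Nat.even_or_odd n with ⟨k, hk⟩ | ⟨k, hk⟩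
        · refine ⟨blkP k, Or.inl ⟨k, rfl⟩, fun h => hn (eq_bot_mono ?_ h)⟩
          have : n = 2*k := by omega
          exact this ▸ inf_le_inf_left b le_sup_left
        · refine ⟨blkP k, Or.inl ⟨k, rfl⟩, fun h => hn (eq_bot_mono ?_ h)⟩
          have : n = 2*k+1 := by omega
          exact this ▸ inf_le_inf_left b le_sup_right
      · push_neg at hmeet
        obtain ⟨w, hw, hbw⟩ := hWmax b hb hmeet
        exact ⟨w, Or.inr hw, hbw⟩
  have hQpart : IsBPartition Q := by
    refine ⟨?_, ?_, ?_⟩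
    · intro h
      rw [Set.mem_insert_iff] at h
      rcases h with h | (⟨k, hk⟩ | hW)
      · exact hne 0 h.symm
      · exact hne (2*k+1) (le_bot_iff.1 (hk ▸ le_sup_left))
      · exact hWne ⊥ hW rfl
    · intro x hx y hy hxy
      rw [Set.mem_insert_iff] at hx hy
      have hQW : ∀ w ∈ W, ∀ k, blkQ k ⊓ w = ⊥ := fun w hw k => by
        simp [hblkQ, inf_sup_right, haW w hw]
      have ha0Q : ∀ l, a 0 ⊓ blkQ l = ⊥ := fun l => by
        simp [hblkQ, inf_sup_left, hdis (show 0 ≠ 2*l+1 by omega),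
          hdis (show 0 ≠ 2*l+2 by omega)]
      rcases hx with rfl | (⟨k, rfl⟩ | hxW) <;> rcases hy with rfl | (⟨l, rfl⟩ | hyW)
      · exact absurd rfl hxy
      · exact ha0Q l
      · rw [inf_comm]; exact hWa y hyW 0
      · rw [inf_comm]; exact ha0Q k
      · simp only [hblkQ]
        refine sup_inf_sup_eq_bot (hdis ?_) (hdis ?_) (hdis ?_) (hdis ?_) <;>
          · intro h; exact hxy (congrArg _ (by omega : k = l))
      · exact hQW y hyW k
      · exact hWa x hxW 0
      · rw [inf_comm]; exact hQW x hxW l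
      · exact hWpd hxW hyW hxy
    · intro b hb
      by_cases hmeet : ∃ n, b ⊓ a n ≠ ⊥
      · obtain ⟨n, hn⟩ := hmeet
        rcases Nat.eq_zero_or_pos n with rfl | hn0
        · exact ⟨a 0, Set.mem_insert _ _, hn⟩
        rcases Nat.even_or_odd n with ⟨k, hk⟩ | ⟨k, hk⟩
        · obtain ⟨k', hk'⟩ : ∃ k', n = 2*k'+2 := ⟨k - 1, by omega⟩
          refine ⟨blkQ k', Set.mem_insert_of_mem _ (Or.inl ⟨k', rfl⟩),
            fun h => hn (eq_bot_mono ?_ h)⟩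
          exact hk' ▸ inf_le_inf_left b le_sup_right
        · refine ⟨blkQ k, Set.mem_insert_of_mem _ (Or.inl ⟨k, rfl⟩),
            fun h => hn (eq_bot_mono ?_ h)⟩
          have : n = 2*k+1 := by omega
          exact this ▸ inf_le_inf_left b le_sup_left
      · push_neg at hmeet
        obtain ⟨w, hw, hbw⟩ := hWmax b hb hmeet
        exact ⟨w, Set.mem_insert_of_mem _ (Or.inr hw), hbw⟩
  refine ⟨P, Q, hPpart, hQpart, ?_⟩
  intro R hR hPR hQR
  -- the block of R containing all the a n
  obtain ⟨r, hrR, hr0⟩ := hPR (blkP 0) (Or.inl ⟨0, rfl⟩)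
  have key : ∀ n, a n ≤ r := by
    intro n
    induction n with
    | zero => exact le_trans le_sup_left hr0
    | succ n ih =>
      have hstep : ∃ s ∈ R, a n ≤ s ∧ a (n+1) ≤ s := by
        rcases Nat.even_or_odd n with ⟨k, hk⟩ | ⟨k, hk⟩
        · have hk2 : n = 2*k := by omega
          obtain ⟨s, hsR, hbs⟩ := hPR (blkP k) (Or.inl ⟨k, rfl⟩)
          exact ⟨s, hsR, hk2 ▸ le_trans le_sup_left hbs, by
            rw [show n+1 = 2*k+1 by omega]; exact le_trans le_sup_right hbs⟩
        · have hk2 : n = 2*k+1 := by omega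
          obtain ⟨s, hsR, hbs⟩ := hQR (blkQ k) (Set.mem_insert_of_mem _ (Or.inl ⟨k, rfl⟩))
          exact ⟨s, hsR, hk2 ▸ le_trans le_sup_left hbs, by
            rw [show n+1 = 2*k+2 by omega]; exact le_trans le_sup_right hbs⟩
      obtain ⟨s, hsR, hns, hn1s⟩ := hstep
      have hsr : s = r := part_eq_of_inf_ne_bot hR hsR hrR
        (fun h => hne n (le_bot_iff.1 (h ▸ le_inf hns ih)))
      exact hsr ▸ hn1s
  -- r is an upper bound but not a least one
  obtain ⟨u, huub, hru⟩ : ∃ u : B, (∀ n, a n ≤ u) ∧ ¬ r ≤ u := by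
    by_contra h
    push_neg at h
    refine hnosup ⟨r, ?_, ?_⟩
    · rintro x ⟨n, rfl⟩; exact key n
    · intro u hu
      exact h u fun n => hu ⟨n, rfl⟩
  set d : B := r \ u with hddef
  have hd : d ≠ ⊥ := fun h => hru (sdiff_eq_bot_iff.1 h)
  have hdan : ∀ n, d ⊓ a n = ⊥ := by
    intro n
    have h1 : d ⊓ a n ≤ uᶜ ⊓ u := inf_le_inf (by rw [hddef, sdiff_eq]; exact inf_le_right) (huub n)
    have h2 : uᶜ ⊓ u = (⊥ : B) := by simp
    exact le_bot_iff.1 (h2 ▸ h1)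
  obtain ⟨w₀, hw₀W, hdw₀⟩ := hWmax d hd hdan
  have hw₀ne : w₀ ≠ ⊥ := hWne w₀ hw₀W
  -- w₀ ≤ r
  obtain ⟨s, hsR, hws⟩ := hPR w₀ (Or.inr hw₀W)
  have hsr : s = r := part_eq_of_inf_ne_bot hR hsR hrR (by
    intro h
    apply hdw₀
    have hle : d ⊓ w₀ ≤ s ⊓ r := le_inf (le_trans inf_le_right hws)
      (le_trans inf_le_left sdiff_le)
    exact le_bot_iff.1 (h ▸ hle))
  have hw₀r : w₀ ≤ r := hsr ▸ hws
  -- each a n avoids w₀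
  have hanw : ∀ n, a n ≤ w₀ᶜ := fun n =>
    le_compl_iff_disjoint_right.2 (disjoint_iff.2 (by rw [inf_comm]; exact hWa w₀ hw₀W n))
  have hanr : ∀ n, a n ≤ r ⊓ w₀ᶜ := fun n => le_inf (key n) (hanw n)
  have hrw : r ⊓ w₀ᶜ ≠ ⊥ := fun h => hne 0 (le_bot_iff.1 (h ▸ hanr 0))
  -- the refined partition
  set R₀ : Set B := insert w₀ (insert (r ⊓ w₀ᶜ) (R \ {r})) with hR₀def
  have hww : w₀ ⊓ (r ⊓ w₀ᶜ) = ⊥ := le_bot_iff.1 (by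
    calc w₀ ⊓ (r ⊓ w₀ᶜ) ≤ w₀ ⊓ w₀ᶜ := inf_le_inf_left w₀ inf_le_right
    _ = ⊥ := by simp)
  have hwS : ∀ t ∈ R, t ≠ r → w₀ ⊓ t = ⊥ := fun t htR htr =>
    le_bot_iff.1 ((inf_le_inf hw₀r le_rfl).trans (hR.2.1 hrR htR (Ne.symm htr)).le)
  have hrwS : ∀ t ∈ R, t ≠ r → (r ⊓ w₀ᶜ) ⊓ t = ⊥ := fun t htR htr =>
    le_bot_iff.1 ((inf_le_inf inf_le_left le_rfl).trans (hR.2.1 hrR htR (Ne.symm htr)).le)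
  have hR₀part : IsBPartition R₀ := by
    refine ⟨?_, ?_, ?_⟩
    · intro h
      rw [hR₀def, Set.mem_insert_iff, Set.mem_insert_iff] at h
      rcases h with h | h | ⟨hmem, _⟩
      · exact hw₀ne h.symm
      · exact hrw h.symm
      · exact hR.1 hmem
    · intro x hx y hy hxy
      rw [hR₀def, Set.mem_insert_iff, Set.mem_insert_iff] at hx hy
      rcases hx with rfl | rfl | ⟨hxR, hxr⟩ <;> rcases hy with rfl | rfl | ⟨hyR, hyr⟩
      · exact absurd rfl hxy
      · exact hww
      · exact hwS y hyR (by simpa using hyr)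
      · rw [inf_comm]; exact hww
      · exact absurd rfl hxy
      · exact hrwS y hyR (by simpa using hyr)
      · rw [inf_comm]; exact hwS x hxR (by simpa using hxr)
      · rw [inf_comm]; exact hrwS x hxR (by simpa using hxr)
      · exact hR.2.1 hxR hyR hxy
    · intro b hb
      obtain ⟨s', hs'R, hbs'⟩ := hR.2.2 b hb
      by_cases hs'r : s' = r
      · rw [hs'r] at hbs'
        by_cases hbw : b ⊓ w₀ = ⊥
        · refine ⟨r ⊓ w₀ᶜ, ?_, fun h => hbs' ?_⟩
          · rw [hR₀def]
            exact Set.mem_insert_of_mem _ (Set.mem_insert _ _)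
          · have hdecomp : b ⊓ r ≤ (b ⊓ w₀) ⊔ (b ⊓ (r ⊓ w₀ᶜ)) := by
              calc b ⊓ r = (b ⊓ r) ⊓ (w₀ ⊔ w₀ᶜ) := by simp
                _ = ((b ⊓ r) ⊓ w₀) ⊔ ((b ⊓ r) ⊓ w₀ᶜ) := inf_sup_left _ _ _
                _ ≤ (b ⊓ w₀) ⊔ (b ⊓ (r ⊓ w₀ᶜ)) := by
                    refine sup_le_sup (inf_le_inf_right w₀ inf_le_left) ?_
                    exact le_of_eq (inf_assoc _ _ _)
            rw [hbw, h] at hdecomp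
            exact le_bot_iff.1 (by simpa using hdecomp)
        · exact ⟨w₀, by rw [hR₀def]; exact Set.mem_insert _ _, hbw⟩
      · refine ⟨s', ?_, hbs'⟩
        rw [hR₀def]
        exact Set.mem_insert_of_mem _ (Set.mem_insert_of_mem _ ⟨hs'R, hs'r⟩)
  have hrne_w : r ≠ w₀ := by
    intro h
    apply hne 0
    have : a 0 ≤ w₀ ⊓ a 0 := le_inf (h ▸ key 0) le_rfl
    exact le_bot_iff.1 (this.trans (hWa w₀ hw₀W 0).le)
  have hrne_rw : r ≠ r ⊓ w₀ᶜ := by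
    intro h
    apply hw₀ne
    have : w₀ ≤ w₀ ⊓ w₀ᶜ := le_inf le_rfl ((hw₀r.trans h.le).trans inf_le_right)
    simpa using le_bot_iff.1 (this.trans (by simp))
  have hR₀ne : R₀ ≠ R := by
    intro h
    have hrmem : r ∈ R₀ := h ▸ hrR
    rw [hR₀def, Set.mem_insert_iff, Set.mem_insert_iff] at hrmem
    rcases hrmem with h' | h' | ⟨_, h'⟩
    · exact hrne_w h'
    · exact hrne_rw h'
    · exact h' rfl
  have hmemw : w₀ ∈ R₀ := by rw [hR₀def]; exact Set.mem_insert _ _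
  have hmemrw : r ⊓ w₀ᶜ ∈ R₀ := by
    rw [hR₀def]; exact Set.mem_insert_of_mem _ (Set.mem_insert _ _)
  -- refinement of W elements
  have hWref : ∀ w ∈ W, ∃ t ∈ R₀, w ≤ t := by
    intro w hw
    obtain ⟨s', hs'R, hws'⟩ := hPR w (Or.inr hw)
    by_cases hs'r : s' = r
    · rw [hs'r] at hws'
      by_cases hww₀ : w = w₀
      · exact ⟨w₀, hmemw, hww₀.le⟩
      · refine ⟨r ⊓ w₀ᶜ, hmemrw, le_inf hws' ?_⟩
        exact le_compl_iff_disjoint_right.2 (disjoint_iff.2 (hWpd hw hw₀W hww₀))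
    · refine ⟨s', ?_, hws'⟩
      rw [hR₀def]
      exact Set.mem_insert_of_mem _ (Set.mem_insert_of_mem _ ⟨hs'R, hs'r⟩)
  refine ⟨R₀, hR₀part, hR₀ne, ?_, ?_, ?_⟩
  · rintro p (⟨k, rfl⟩ | hpW)
    · exact ⟨r ⊓ w₀ᶜ, hmemrw, sup_le (hanr _) (hanr _)⟩
    · exact hWref p hpW
  · intro p hp
    rw [hQdef, Set.mem_insert_iff] at hp
    rcases hp with rfl | (⟨k, rfl⟩ | hpW)
    · exact ⟨r ⊓ w₀ᶜ, hmemrw, hanr 0⟩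
    · exact ⟨r ⊓ w₀ᶜ, hmemrw, sup_le (hanr _) (hanr _)⟩
    · exact hWref p hpW
  · intro t ht
    rw [hR₀def, Set.mem_insert_iff, Set.mem_insert_iff] at ht
    rcases ht with rfl | rfl | ⟨htR, _⟩
    · exact ⟨r, hrR, hw₀r⟩
    · exact ⟨r, hrR, inf_le_left⟩
    · exact ⟨t, htR, le_rfl⟩
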